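/- Let a ≥ 0. For every ε ∈ (0,1], ∫_{−1/2}^{1/2} ε^{(a+2)/2} (t² + ε)^{−(a+3)/2} dt ≤ ∫_{−∞}^{∞} (t² + 1)^{−(a+3)/2} dt, and the right-hand side integral is finite. -/

import Mathlib

open MeasureTheory intervalIntegral

/-- For `a ≥ 0` and every `ε ∈ (0,1]`,
`∫_{−1/2}^{1/2} ε^{(a+2)/2} (t² + ε)^{−(a+3)/2} dt ≤ ∫_ℝ (t² + 1)^{−(a+3)/2} dt`,
and the right-hand side integral is finite. -/
theorem stmt_17 (a : ℝ) (ha : 0 ≤ a) :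
    Integrable (fun t : ℝ => (t ^ 2 + 1) ^ (-(a + 3) / 2)) ∧
    ∀ ε ∈ Set.Ioc (0 : ℝ) 1,
      (∫ t in (-(1 / 2) : ℝ)..(1 / 2), ε ^ ((a + 2) / 2) * (t ^ 2 + ε) ^ (-(a + 3) / 2)) ≤
        ∫ t : ℝ, (t ^ 2 + 1) ^ (-(a + 3) / 2) := by
  have hInt : Integrable (fun t : ℝ => (t ^ 2 + 1) ^ (-(a + 3) / 2)) := by
    have h := integrable_rpow_neg_one_add_norm_sq (E := ℝ) (μ := volume) (r := a + 3)
      (by simp; linarith)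
    have heq : (fun t : ℝ => (t ^ 2 + 1) ^ (-(a + 3) / 2)) =
        fun x : ℝ => ((1 : ℝ) + ‖x‖ ^ 2) ^ (-(a + 3) / 2) := by
      funext x
      rw [Real.norm_eq_abs, sq_abs, add_comm]
    rw [heq]
    exact h
  refine ⟨hInt, fun ε hε => ?_⟩
  obtain ⟨hε0, hε1⟩ := hε
  set s : ℝ := Real.sqrt ε with hs
  have hs0 : 0 < s := Real.sqrt_pos.mpr hε0
  have hs2 : s ^ 2 = ε := Real.sq_sqrt hε0.le
  have hsrpow : s = ε ^ ((1:ℝ)/2) := Real.sqrt_eq_rpow ε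
  set f : ℝ → ℝ := fun u => (u ^ 2 + 1) ^ (-(a + 3) / 2) with hf
  have hfnn : ∀ u, 0 ≤ f u := fun u => Real.rpow_nonneg (by positivity) _
  -- pointwise identity
  have key : ∀ t : ℝ, ε ^ ((a + 2) / 2) * (t ^ 2 + ε) ^ (-(a + 3) / 2)
      = s⁻¹ * f (t / s) := by
    intro t
    have ht : (t / s) ^ 2 + 1 = (t ^ 2 + ε) / ε := by
      field_simp
      rw [← hs2]
      ring
    have htε : (0:ℝ) < t ^ 2 + ε := by positivity
    have hfval : f (t / s) = (t ^ 2 + ε) ^ (-(a + 3) / 2) * ε ^ ((a + 3)/2) := by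
      rw [hf]
      simp only
      rw [ht, Real.div_rpow htε.le hε0.le, div_eq_mul_inv, ← Real.rpow_neg hε0.le]
      norm_num
      left
      congr 1
      ring
    have hsi : s⁻¹ = ε ^ (-(1:ℝ)/2) := by
      rw [hsrpow, ← Real.rpow_neg hε0.le]
      norm_num
    rw [hfval, hsi, ← mul_assoc, mul_comm (ε ^ (-(1:ℝ)/2)) _, mul_assoc,
      ← Real.rpow_add hε0, mul_comm]
    norm_num
    left
    ring_nf
  -- rewrite the integral via the substitution t = s u
  have hsub : (∫ t in (-(1 / 2) : ℝ)..(1 / 2), ε ^ ((a + 2) / 2) * (t ^ 2 + ε) ^ (-(a + 3) / 2))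
      = ∫ u in ((-(1/2):ℝ)/s)..((1/2:ℝ)/s), f u := by
    rw [intervalIntegral.integral_congr (g := fun t => s⁻¹ * f (t / s))
      (fun t _ => key t)]
    rw [intervalIntegral.integral_const_mul, intervalIntegral.integral_comp_div f hs0.ne',
      smul_eq_mul, ← mul_assoc, inv_mul_cancel₀ hs0.ne', one_mul]
  rw [hsub]
  have hle : ((-(1/2):ℝ)/s) ≤ ((1/2:ℝ)/s) := by
    gcongr
    linarith
  rw [intervalIntegral.integral_of_le hle]
  exact setIntegral_le_integral hInt (Filter.Eventually.of_forall hfnn)
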